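/- arXiv:1411.4848 — 4 statements merged into one kernel-verified Lean document; each statement's English description precedes it below -/
import Mathlib

section
/- Let ν > 2, y > 0 and z > 0 with z·y > 1. Then ∫_{z^{1/ν}}^∞ u/(1 + y u^ν) du = z^{2/ν − 1} / ((ν − 2) y) · ₂F₁(1, 1 − 2/ν; 2 − 2/ν; −1/(z y)), where ₂F₁ is the Gauss hypergeometric series (which converges here since |−1/(zy)| < 1). -/
open MeasureTheory Real

/-- The Gauss hypergeometric series ₂F₁(a,b;c;w). -/
noncomputable def hyp2F1 (a b c w : ℝ) : ℝ :=
  ∑' n : ℕ, ((ascPochhammer ℝ n).eval a * (ascPochhammer ℝ n).eval b /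
    (ascPochhammer ℝ n).eval c) * w ^ n / (n.factorial : ℝ)

lemma ascPochhammer_succ_ratio (b : ℝ) (n : ℕ) :
    b * (ascPochhammer ℝ n).eval (b + 1) = (ascPochhammer ℝ n).eval b * (b + n) := by
  induction n with
  | zero => simp
  | succ n ih =>
    rw [ascPochhammer_succ_eval, ascPochhammer_succ_eval]
    push_cast
    linear_combination (b + 1 + (n:ℝ)) * ih

set_option maxHeartbeats 1000000 in
/-- tail integral of u/(1 + y u^ν) in closed hypergeometric form. -/
theorem integral_tail_eq_hyp2F1 (ν y z : ℝ) (hν : 2 < ν) (hy : 0 < y) (hz : 0 < z)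
    (hzy : 1 < z * y) :
    ∫ u in Set.Ioi (z ^ (1 / ν)), u / (1 + y * u ^ ν)
      = z ^ (2 / ν - 1) / ((ν - 2) * y) *
        hyp2F1 1 (1 - 2 / ν) (2 - 2 / ν) (-1 / (z * y)) := by
  have hν0 : (0:ℝ) < ν := by linarith
  set A : ℝ := z ^ (1 / ν) with hAdef
  have hA : 0 < A := rpow_pos_of_pos hz _
  have hAν : A ^ ν = z := by
    rw [hAdef, ← Real.rpow_mul hz.le]
    rw [show 1 / ν * ν = 1 by field_simp]
    exact rpow_one z
  set p : ℕ → ℝ := fun n => 1 - ν * (n + 1) with hpdef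
  have hnu1 : ∀ n : ℕ, 2 < ν * ((n:ℝ) + 1) := by
    intro n
    have h1 : (1:ℝ) ≤ (n:ℝ) + 1 := by linarith [Nat.cast_nonneg (α := ℝ) n]
    nlinarith
  have hp : ∀ n : ℕ, p n < -1 := by
    intro n
    have := hnu1 n
    simp only [hpdef]
    linarith
  set F : ℕ → ℝ → ℝ := fun n u => ((-1)^n / y^(n+1)) * u ^ p n with hFdef
  -- value of the basic integral
  have hApow : ∀ n : ℕ, A ^ (p n + 1) = z ^ (2 / ν - ((n:ℝ) + 1)) := by
    intro n
    rw [show (2 / ν - ((n:ℝ) + 1)) = (1/ν) * (p n + 1) by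
      simp only [hpdef]; field_simp; ring]
    rw [Real.rpow_mul hz.le]
  have J : ∀ (c : ℝ) (n : ℕ), ∫ u in Set.Ioi A, c * u ^ p n
      = c * (z ^ (2 / ν - ((n:ℝ) + 1)) / (ν * ((n:ℝ) + 1) - 2)) := by
    intro c n
    rw [MeasureTheory.integral_const_mul, integral_Ioi_rpow_of_lt (hp n) hA]
    congr 1
    have hApn := hApow n
    rw [show p n + 1 = -(ν * ((n:ℝ)+1) - 2) by simp only [hpdef]; ring] at hApn ⊢
    rw [hApn, neg_div, div_neg, neg_neg]
  set e : ℕ → ℝ := fun n => z ^ (2 / ν - ((n:ℝ) + 1)) / (y^(n+1) * (ν * ((n:ℝ) + 1) - 2))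
    with hedef
  have hepos : ∀ n : ℕ, 0 < e n := by
    intro n
    have h := hnu1 n
    exact div_pos (rpow_pos_of_pos hz _) (mul_pos (pow_pos hy _) (by linarith))
  have hint : ∀ n : ℕ, IntegrableOn (F n) (Set.Ioi A) := by
    intro n
    exact (integrableOn_Ioi_rpow_of_lt (hp n) hA).const_mul _
  have hnormint : ∀ n : ℕ, ∫ u in Set.Ioi A, ‖F n u‖ = e n := by
    intro n
    have : ∫ u in Set.Ioi A, ‖F n u‖ = ∫ u in Set.Ioi A, (1 / y^(n+1)) * u ^ p n := by
      apply setIntegral_congr_fun measurableSet_Ioi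
      intro u hu
      have hu0 : 0 < u := hA.trans hu
      simp only [hFdef, norm_mul, norm_div, norm_pow, norm_neg, norm_one, one_pow,
        Real.norm_of_nonneg (rpow_nonneg hu0.le _), Real.norm_of_nonneg (pow_pos hy _).le]
    rw [this, J, hedef]
    field_simp
  have hIval : ∀ n : ℕ, ∫ u in Set.Ioi A, F n u = (-1)^n * e n := by
    intro n
    rw [hFdef]
    simp only
    rw [J, hedef]
    field_simp
  -- summability of e
  have hr : (0:ℝ) < (z*y)⁻¹ := by positivity
  have hr1 : (z*y)⁻¹ < 1 := inv_lt_one_of_one_lt₀ hzy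
  have hzpow : ∀ n : ℕ, z ^ (2 / ν - ((n:ℝ) + 1)) = z ^ (2/ν - 1) * ((z:ℝ)^n)⁻¹ := by
    intro n
    rw [show (2 / ν - ((n:ℝ) + 1)) = (2/ν - 1) + (-(n:ℝ)) by ring,
      Real.rpow_add hz, Real.rpow_neg hz.le, Real.rpow_natCast]
  have hebound : ∀ n : ℕ, e n ≤ (z ^ (2/ν - 1) / (y * (ν - 2))) * ((z*y)⁻¹)^n := by
    intro n
    have h2 : ν - 2 ≤ ν * ((n:ℝ) + 1) - 2 := by
      have h1 : (1:ℝ) ≤ (n:ℝ) + 1 := by linarith [Nat.cast_nonneg (α := ℝ) n]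
      nlinarith
    have hD : ν * ((n:ℝ) + 1) - 2 ≠ 0 := by linarith [hnu1 n]
    have hz2 : (0:ℝ) < z ^ (2/ν - 1) := rpow_pos_of_pos hz _
    have key : e n = (z ^ (2/ν - 1) / (y * (ν * ((n:ℝ)+1) - 2))) * ((z*y)⁻¹)^n := by
      simp only [hedef]
      rw [hzpow n]
      obtain ⟨Z, hZ⟩ : ∃ Z, z ^ (2/ν-1) = Z := ⟨_, rfl⟩
      rw [hZ]
      have hzn : ((z:ℝ)^n) ≠ 0 := by positivity
      field_simp
      rw [one_div, inv_pow, mul_pow, pow_succ, mul_inv]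
      field_simp
    have h3 : (0:ℝ) < y * (ν - 2) := by nlinarith
    have h4 : y * (ν - 2) ≤ y * (ν * ((n:ℝ)+1) - 2) := by nlinarith
    rw [key]
    gcongr
  have hesum : Summable e := by
    apply Summable.of_nonneg_of_le (fun n => (hepos n).le) hebound
    exact (summable_geometric_of_lt_one hr.le hr1).mul_left _
  have hsumnorm : Summable (fun n => ∫ u in Set.Ioi A, ‖F n u‖) := by
    apply hesum.congr
    intro n
    exact (hnormint n).symm
  -- pointwise series expansion
  have hpt : ∀ u ∈ Set.Ioi A, (∑' n : ℕ, F n u) = u / (1 + y * u ^ ν) := by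
    intro u hu
    have hu0 : 0 < u := hA.trans hu
    have huν : z < u ^ ν := by
      rw [← hAν]
      exact rpow_lt_rpow hA.le hu hν0
    have hs : 1 < y * u ^ ν := by
      calc (1:ℝ) < z * y := hzy
      _ ≤ u ^ ν * y := by nlinarith
      _ = y * u ^ ν := mul_comm _ _
    have hs0 : 0 < y * u ^ ν := by linarith
    set t : ℝ := (y * u ^ ν)⁻¹ with htdef
    have ht0 : 0 < t := by positivity
    have ht1 : t < 1 := inv_lt_one_of_one_lt₀ hs
    have hgeo : ∑' n : ℕ, (-t)^n = (1 + t)⁻¹ := by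
      rw [tsum_geometric_of_norm_lt_one (by rw [norm_neg, Real.norm_of_nonneg ht0.le]; exact ht1)]
      ring_nf
    have hterm : ∀ n : ℕ, F n u = (u * t) * (-t)^n := by
      intro n
      have h1 : t ^ (n+1) = (y^(n+1))⁻¹ * (u ^ (ν * ((n:ℝ)+1)))⁻¹ := by
        rw [htdef, mul_inv, mul_pow, inv_pow, inv_pow]
        congr 1
        rw [← Real.rpow_natCast (u ^ ν) (n+1), ← Real.rpow_mul hu0.le]
        push_cast
        ring_nf
      have h2 : u * (u ^ (ν * ((n:ℝ)+1)))⁻¹ = u ^ p n := by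
        rw [hpdef]
        simp only
        rw [show (1 - ν * ((n:ℝ)+1)) = 1 + (-(ν * ((n:ℝ)+1))) by ring,
          Real.rpow_add hu0, Real.rpow_one, Real.rpow_neg hu0.le]
      rw [hFdef]
      simp only
      rw [← h2]
      rw [show u * t * (-t)^n = (-1)^n * (u * t^(n+1)) by rw [neg_pow]; ring]
      rw [h1]
      ring
    calc (∑' n : ℕ, F n u) = ∑' n : ℕ, (u * t) * (-t)^n := tsum_congr hterm
      _ = (u * t) * (1 + t)⁻¹ := by rw [tsum_mul_left, hgeo]
      _ = u / (1 + y * u ^ ν) := by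
          have h1t : (1:ℝ) + y * u ^ ν ≠ 0 := by linarith
          have h2t : (1:ℝ) + t ≠ 0 := by linarith
          rw [eq_div_iff h1t, htdef]
          field_simp
          ring
  -- LHS as a sum
  have hLHS : ∫ u in Set.Ioi A, u / (1 + y * u ^ ν) = ∑' n : ℕ, (-1:ℝ)^n * e n := by
    rw [← setIntegral_congr_fun measurableSet_Ioi hpt,
      ← integral_tsum_of_summable_integral_norm hint hsumnorm]
    exact tsum_congr hIval
  rw [hLHS]
  -- RHS computation
  set b : ℝ := 1 - 2 / ν with hbdef
  have hb : 0 < b := by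
    rw [hbdef]
    have : 2 / ν < 1 := (div_lt_one hν0).mpr hν
    linarith
  have hc : (2 : ℝ) - 2 / ν = b + 1 := by rw [hbdef]; ring
  set w : ℝ := -1 / (z * y) with hwdef
  have hterm2 : ∀ n : ℕ,
      ((ascPochhammer ℝ n).eval 1 * (ascPochhammer ℝ n).eval b /
        (ascPochhammer ℝ n).eval (b+1)) * w ^ n / (n.factorial : ℝ)
      = (b / (b + n)) * w ^ n := by
    intro n
    have hPc : 0 < (ascPochhammer ℝ n).eval (b+1) := ascPochhammer_pos n _ (by linarith)
    have hbn : (0:ℝ) < b + n := by linarith [Nat.cast_nonneg (α := ℝ) n]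
    have hfact : (0:ℝ) < (n.factorial : ℝ) := by positivity
    have hratio := ascPochhammer_succ_ratio b n
    have hPP : Polynomial.eval b (ascPochhammer ℝ n) / Polynomial.eval (b+1) (ascPochhammer ℝ n)
        = b / (b + n) := by
      rw [div_eq_div_iff hPc.ne' hbn.ne']
      linear_combination -hratio
    rw [ascPochhammer_eval_one]
    rw [show ((n.factorial : ℝ) * Polynomial.eval b (ascPochhammer ℝ n) /
        Polynomial.eval (b+1) (ascPochhammer ℝ n)) * w ^ n / (n.factorial : ℝ)
        = (Polynomial.eval b (ascPochhammer ℝ n) / Polynomial.eval (b+1) (ascPochhammer ℝ n))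
          * w ^ n by
      field_simp]
    rw [hPP]
  rw [hc]
  unfold hyp2F1
  rw [← tsum_mul_left]
  apply tsum_congr
  intro n
  rw [hterm2 n]
  have hwn : w ^ n = (-1:ℝ)^n / ((z*y)^n) := by
    rw [hwdef, div_pow]
  rw [hwn, hedef]
  simp only
  have hbn : (0:ℝ) < b + n := by linarith [Nat.cast_nonneg (α := ℝ) n]
  have hnub : b = (ν - 2)/ν := by
    rw [hbdef]
    field_simp
  have hν2 : ν - 2 ≠ 0 := by linarith
  have hd : ν * ((n:ℝ)+1) - 2 ≠ 0 := by have := hnu1 n; linarith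
  have hbn' : ((ν - 2)/ν + (n:ℝ)) ≠ 0 := by
    rw [hnub] at hbn; linarith
  rw [hzpow n, hnub]
  obtain ⟨Z, hZ⟩ : ∃ Z, z ^ (2/ν - 1) = Z := ⟨_, rfl⟩
  rw [hZ]
  have hsimp : ((ν-2)/ν)/((ν-2)/ν + (n:ℝ)) = (ν-2)/(ν*((n:ℝ)+1) - 2) := by
    rw [div_eq_div_iff hbn' hd]
    field_simp
    ring
  rw [hsimp, mul_pow]
  have hzn : ((z:ℝ)^n) ≠ 0 := by positivity
  have hyn : ((y:ℝ)^n) ≠ 0 := by positivity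
  rw [pow_succ]
  field_simp
end

section
/- Let α > 2, c > 0 and D > 0. Then 2·∫_D^∞ x·(1 − exp(−c x^{−α})) dx = −D² + c^{2/α} Γ(1 − 2/α) + (2/α)·c^{2/α}·Γ(−2/α, c/D^α), where Γ denotes the real Gamma function and Γ(a,u) the real upper incomplete gamma function. -/
open MeasureTheory Real

open Set Filter Topology

/-- The real upper incomplete gamma function Γ(a,u) = ∫_u^∞ t^{a−1} e^{−t} dt. -/
noncomputable def uGamma (a u : ℝ) : ℝ := ∫ t in Set.Ioi u, t ^ (a - 1) * Real.exp (-t)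

lemma aux_integrableOn {r t : ℝ} (ht : 0 < t) (hr : r ≤ 0) :
    IntegrableOn (fun y => y ^ r * Real.exp (-y)) (Set.Ioi t) := by
  have h1 : IntegrableOn (fun y => t ^ r * Real.exp (-(1:ℝ) * y)) (Set.Ioi t) :=
    (exp_neg_integrableOn_Ioi t one_pos).const_mul _
  refine h1.mono' ?_ ?_
  · refine (ContinuousOn.mul ?_ (Real.continuous_exp.comp continuous_neg).continuousOn
      ).aestronglyMeasurable measurableSet_Ioi
    exact continuousOn_id.rpow_const fun y hy => Or.inl (ne_of_gt (ht.trans hy))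
  · filter_upwards [ae_restrict_mem measurableSet_Ioi] with y hy
    have hy0 : 0 < y := ht.trans hy
    rw [Real.norm_eq_abs, abs_of_nonneg (by positivity)]
    rw [neg_one_mul]
    exact mul_le_mul_of_nonneg_right
      (Real.rpow_le_rpow_of_nonpos ht hy.le hr) (Real.exp_pos _).le

lemma uGamma_rec {s t : ℝ} (hs : s < 0) (ht : 0 < t) :
    uGamma (s + 1) t = t ^ s * Real.exp (-t) + s * uGamma s t := by
  have key : ∫ y in Ioi t, (y ^ s * Real.exp (-y) - s * (y ^ (s - 1) * Real.exp (-y)))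
      = t ^ s * Real.exp (-t) := by
    have hderiv : ∀ y ∈ Ici t, HasDerivAt (fun y : ℝ => -(y ^ s * Real.exp (-y)))
        (y ^ s * Real.exp (-y) - s * (y ^ (s - 1) * Real.exp (-y))) y := by
      intro y hy
      have hy0 : 0 < y := lt_of_lt_of_le ht hy
      have h1 : HasDerivAt (fun y : ℝ => y ^ s) (s * y ^ (s - 1)) y :=
        Real.hasDerivAt_rpow_const (Or.inl hy0.ne')
      have h2 : HasDerivAt (fun y : ℝ => Real.exp (-y)) (-Real.exp (-y)) y := by
        simpa using (hasDerivAt_neg' y).exp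
      have := (h1.mul h2).neg
      refine this.congr_deriv ?_
      ring
    have hint : IntegrableOn
        (fun y => y ^ s * Real.exp (-y) - s * (y ^ (s - 1) * Real.exp (-y))) (Ioi t) :=
      (aux_integrableOn ht hs.le).sub ((aux_integrableOn ht (by linarith)).const_mul s)
    have htend : Tendsto (fun y : ℝ => -(y ^ s * Real.exp (-y))) atTop (𝓝 0) := by
      have h1 : Tendsto (fun y : ℝ => y ^ s) atTop (𝓝 0) := by
        simpa using tendsto_rpow_neg_atTop (y := -s) (by linarith)
      have h2 : Tendsto (fun y : ℝ => Real.exp (-y)) atTop (𝓝 0) := by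
        exact Real.tendsto_exp_atBot.comp tendsto_neg_atTop_atBot
      simpa using (h1.mul h2).neg
    have := integral_Ioi_of_hasDerivAt_of_tendsto' hderiv hint htend
    rw [this]; simp
  have h1 := aux_integrableOn ht hs.le
  have h2 := aux_integrableOn ht (show s - 1 ≤ 0 by linarith)
  rw [integral_sub h1 (h2.const_mul s), integral_const_mul] at key
  unfold uGamma
  have : (fun y : ℝ => y ^ (s + 1 - 1) * Real.exp (-y)) = fun y => y ^ s * Real.exp (-y) := by
    funext y; ring_nf
  rw [this]
  linarith [key]

lemma uGamma_split {a x b : ℝ} (hx : 0 < x) (hxb : x ≤ b) (ha : a ≤ 1) :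
    uGamma a x = (∫ y in Ioc x b, y ^ (a - 1) * Real.exp (-y)) + uGamma a b := by
  unfold uGamma
  rw [← setIntegral_union (Ioc_disjoint_Ioi le_rfl) measurableSet_Ioi
    ((aux_integrableOn hx (by linarith)).mono_set Ioc_subset_Ioi_self)
    ((aux_integrableOn hx (by linarith)).mono_set (Ioi_subset_Ioi hxb)),
    Ioc_union_Ioi_eq_Ioi hxb]

lemma tendsto_uGamma_zero {a : ℝ} (ha : 0 < a) (ha1 : a ≤ 1) :
    Tendsto (fun t => uGamma a t) (𝓝[>] (0:ℝ)) (𝓝 (Real.Gamma a)) := by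
  have hGamma : Real.Gamma a = ∫ y in Ioi (0:ℝ), y ^ (a - 1) * Real.exp (-y) := by
    rw [Real.Gamma_eq_integral ha]
    exact setIntegral_congr_fun measurableSet_Ioi fun y _ => mul_comm _ _
  have hint : IntegrableOn (fun y => y ^ (a - 1) * Real.exp (-y)) (Ioi (0:ℝ)) := by
    have := Real.GammaIntegral_convergent ha
    exact this.congr_fun (fun y _ => mul_comm _ _) measurableSet_Ioi
  have heq : ∀ t ∈ Ioi (0:ℝ),
      uGamma a t = Real.Gamma a - ∫ y in Ioc 0 t, y ^ (a - 1) * Real.exp (-y) := by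
    intro t ht
    rw [hGamma, ← Ioc_union_Ioi_eq_Ioi (le_of_lt ht),
      setIntegral_union (Ioc_disjoint_Ioi le_rfl) measurableSet_Ioi
        (hint.mono_set Ioc_subset_Ioi_self) (hint.mono_set (Ioi_subset_Ioi (le_of_lt ht)))]
    unfold uGamma; ring
  have hbound : Tendsto (fun t : ℝ => ∫ y in Ioc 0 t, y ^ (a - 1) * Real.exp (-y))
      (𝓝[>] (0:ℝ)) (𝓝 0) := by
    have hup : Tendsto (fun t : ℝ => t ^ a / a) (𝓝[>] (0:ℝ)) (𝓝 0) := by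
      have : Tendsto (fun t : ℝ => t ^ a) (𝓝 (0:ℝ)) (𝓝 ((0:ℝ) ^ a)) :=
        (Real.continuousAt_rpow_const 0 a (Or.inr ha.le)).tendsto
      rw [Real.zero_rpow ha.ne'] at this
      simpa using (this.mono_left nhdsWithin_le_nhds).div_const a
    refine tendsto_of_tendsto_of_tendsto_of_le_of_le' tendsto_const_nhds hup ?_ ?_
    · filter_upwards [self_mem_nhdsWithin] with t ht
      exact setIntegral_nonneg measurableSet_Ioc fun y hy => by have := hy.1; positivity
    · filter_upwards [self_mem_nhdsWithin] with t ht
      have h1 : IntegrableOn (fun y : ℝ => y ^ (a - 1)) (Ioc 0 t) := by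
        have := intervalIntegral.intervalIntegrable_rpow' (a := 0) (b := t)
          (r := a - 1) (by linarith)
        rwa [intervalIntegrable_iff_integrableOn_Ioc_of_le (le_of_lt ht)] at this
      have h2 : (∫ y in Ioc 0 t, y ^ (a - 1) * Real.exp (-y)) ≤ ∫ y in Ioc 0 t, y ^ (a - 1) := by
        refine setIntegral_mono_on (hint.mono_set Ioc_subset_Ioi_self) h1
          measurableSet_Ioc fun y hy => ?_
        nth_rewrite 2 [← mul_one (y ^ (a - 1))]
        exact mul_le_mul_of_nonneg_left
          (by simpa using Real.exp_le_exp.2 (by linarith [hy.1])) (by have := hy.1; positivity)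
      refine h2.trans ?_
      rw [← intervalIntegral.integral_of_le (le_of_lt ht),
        integral_rpow (Or.inl (by linarith))]
      rw [Real.zero_rpow (by linarith : a - 1 + 1 ≠ 0)]
      ring_nf
      exact le_refl _
  have := (tendsto_const_nhds (x := Real.Gamma a)).sub hbound
  rw [sub_zero] at this
  refine this.congr' ?_
  filter_upwards [self_mem_nhdsWithin] with t ht
  exact (heq t ht).symm

lemma hasDerivAt_uGamma {a t : ℝ} (ht : 0 < t) (ha : a ≤ 1) :
    HasDerivAt (uGamma a) (-(t ^ (a - 1) * Real.exp (-t))) t := by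
  have htb : t < t + 1 := by linarith
  have hcont : ContinuousOn (fun y : ℝ => y ^ (a - 1) * Real.exp (-y)) (Ioi (0:ℝ)) := by
    refine ContinuousOn.mul ?_ (Real.continuous_exp.comp continuous_neg).continuousOn
    exact continuousOn_id.rpow_const fun y hy => Or.inl (ne_of_gt hy)
  have hii : IntervalIntegrable (fun y : ℝ => y ^ (a - 1) * Real.exp (-y))
      volume (t + 1) t := by
    refine IntervalIntegrable.symm ?_
    rw [intervalIntegrable_iff_integrableOn_Ioc_of_le htb.le]
    exact (aux_integrableOn (half_pos ht) (by linarith)).mono_set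
      fun y hy => lt_of_lt_of_le (by linarith) hy.1.le
  have hF : HasDerivAt (fun x => ∫ y in (t+1)..x, y ^ (a - 1) * Real.exp (-y))
      (t ^ (a - 1) * Real.exp (-t)) t := by
    refine intervalIntegral.integral_hasDerivAt_right hii ?_ ?_
    · exact hcont.stronglyMeasurableAtFilter isOpen_Ioi t ht
    · exact hcont.continuousAt (Ioi_mem_nhds ht)
  have key : (fun x => uGamma a (t+1) - ∫ y in (t+1)..x, y ^ (a - 1) * Real.exp (-y))
      =ᶠ[𝓝 t] uGamma a := by
    filter_upwards [Ioo_mem_nhds ht htb] with x hx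
    rw [uGamma_split hx.1 (le_of_lt hx.2) ha, intervalIntegral.integral_symm,
      intervalIntegral.integral_of_le (le_of_lt hx.2)]
    ring
  simpa using (((hasDerivAt_const t _).sub hF).congr_of_eventuallyEq key.symm)

lemma tendsto_H {s : ℝ} (hs1 : -1 < s) (hs0 : s < 0) :
    Tendsto (fun t => t ^ s / s + uGamma s t) (𝓝[>] (0:ℝ))
      (𝓝 (Real.Gamma (s + 1) / s)) := by
  have heq : ∀ t ∈ Ioi (0:ℝ), t ^ s / s + uGamma s t
      = (t ^ s * (1 - Real.exp (-t)) + uGamma (s + 1) t) / s := by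
    intro t ht
    have hs' : s ≠ 0 := ne_of_lt hs0
    rw [uGamma_rec hs0 ht]
    field_simp
    ring
  have h1 : Tendsto (fun t : ℝ => t ^ s * (1 - Real.exp (-t))) (𝓝[>] (0:ℝ)) (𝓝 0) := by
    have hup : Tendsto (fun t : ℝ => t ^ (s + 1)) (𝓝[>] (0:ℝ)) (𝓝 0) := by
      have : Tendsto (fun t : ℝ => t ^ (s+1)) (𝓝 (0:ℝ)) (𝓝 ((0:ℝ) ^ (s+1))) :=
        (Real.continuousAt_rpow_const 0 (s+1) (Or.inr (by linarith))).tendsto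
      rw [Real.zero_rpow (by linarith)] at this
      exact this.mono_left nhdsWithin_le_nhds
    refine tendsto_of_tendsto_of_tendsto_of_le_of_le' tendsto_const_nhds hup ?_ ?_
    · filter_upwards [self_mem_nhdsWithin] with t ht
      have ht' : (0:ℝ) < t := ht
      have h0 : (0:ℝ) ≤ 1 - Real.exp (-t) := by
        have : Real.exp (-t) ≤ 1 := by
          simpa using Real.exp_le_exp.2 (by linarith : -t ≤ 0)
        linarith
      positivity
    · filter_upwards [self_mem_nhdsWithin] with t ht
      have ht' : (0:ℝ) < t := ht
      have hb : 1 - Real.exp (-t) ≤ t := by nlinarith [Real.add_one_le_exp (-t)]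
      calc t ^ s * (1 - Real.exp (-t)) ≤ t ^ s * t := by
            exact mul_le_mul_of_nonneg_left hb (by positivity)
        _ = t ^ (s + 1) := by
            rw [Real.rpow_add_one ht'.ne' s]
  have h2 := tendsto_uGamma_zero (by linarith : 0 < s + 1) (by linarith)
  have := ((h1.add h2).div_const s)
  rw [zero_add] at this
  exact this.congr' (by filter_upwards [self_mem_nhdsWithin] with t ht
    using (heq t ht).symm)

/-- closed form of 2∫_D^∞ x(1 − exp(−c x^{−α})) dx. -/
theorem integral_tail_one_sub_exp (α c D : ℝ) (hα : 2 < α) (hc : 0 < c) (hD : 0 < D) :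
    2 * ∫ x in Set.Ioi D, x * (1 - Real.exp (-(c * x ^ (-α))))
      = -D ^ 2 + c ^ (2 / α) * Real.Gamma (1 - 2 / α)
        + (2 / α) * c ^ (2 / α) * uGamma (-(2 / α)) (c / D ^ α) := by
  have hα0 : (0:ℝ) < α := by linarith
  have hαne : α ≠ 0 := hα0.ne'
  set s : ℝ := -(2 / α) with hs_def
  have h2α : (0:ℝ) < 2 / α := by positivity
  have hs0 : s < 0 := by rw [hs_def]; linarith
  have hs1 : -1 < s := by
    have : 2 / α < 1 := (div_lt_one hα0).2 (by linarith)
    rw [hs_def]; linarith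
  have hsne : s ≠ 0 := ne_of_lt hs0
  set F : ℝ → ℝ := fun x => x ^ 2 / 2 - c ^ (2 / α) / α * uGamma s (c * x ^ (-α)) with hF_def
  have hipos : ∀ x : ℝ, 0 < x → 0 < c * x ^ (-α) := fun x hx => by positivity
  -- derivative of F
  have hderiv : ∀ x ∈ Ici D, HasDerivAt F (x * (1 - Real.exp (-(c * x ^ (-α))))) x := by
    intro x hx
    have hx0 : 0 < x := lt_of_lt_of_le hD hx
    have hinner : HasDerivAt (fun x : ℝ => c * x ^ (-α)) (c * (-α * x ^ (-α - 1))) x :=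
      (Real.hasDerivAt_rpow_const (p := -α) (Or.inl hx0.ne')).const_mul c
    have houter := hasDerivAt_uGamma (hipos x hx0) (by linarith : s ≤ 1)
    have hcomp := houter.comp x hinner
    have hsq : HasDerivAt (fun x : ℝ => x ^ 2 / 2) x x := by
      simpa using (hasDerivAt_pow 2 x).div_const 2
    have hsum := hsq.sub (hcomp.const_mul (c ^ (2 / α) / α))
    rw [hF_def]
    refine hsum.congr_deriv ?_
    -- the scalar identity
    have hexp : (-α) * (s - 1) = 2 + α := by
      rw [hs_def]; field_simp; ring
    have hT : (c * x ^ (-α)) ^ (s - 1) = c ^ (s - 1) * x ^ ((2:ℝ) + α) := by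
      rw [Real.mul_rpow hc.le (by positivity), ← Real.rpow_mul hx0.le, hexp]
    have hc2 : c ^ (2 / α) * c ^ (s - 1) * c = 1 := by
      nth_rewrite 3 [← Real.rpow_one c]
      rw [← Real.rpow_add hc, ← Real.rpow_add hc,
        show 2 / α + (s - 1) + 1 = 0 by rw [hs_def]; ring, Real.rpow_zero]
    have hx2 : x ^ ((2:ℝ) + α) * x ^ (-α - 1) = x := by
      rw [← Real.rpow_add hx0, show (2:ℝ) + α + (-α - 1) = 1 by ring, Real.rpow_one]
    have hkey : c ^ (2 / α) / α * ((c * x ^ (-α)) ^ (s - 1) * (c * (α * x ^ (-α - 1)))) = x := by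
      rw [hT]
      have expand : c ^ (2 / α) / α * (c ^ (s - 1) * x ^ ((2:ℝ) + α) * (c * (α * x ^ (-α - 1))))
          = (c ^ (2 / α) * c ^ (s - 1) * c) * (x ^ ((2:ℝ) + α) * x ^ (-α - 1)) * (α / α) := by
        ring
      rw [expand, hc2, hx2, div_self hαne]; ring
    linear_combination (-Real.exp (-(c * x ^ (-α)))) * hkey
  -- integrability of the integrand
  have hint : IntegrableOn (fun x => x * (1 - Real.exp (-(c * x ^ (-α))))) (Ioi D) := by
    have hmaj : IntegrableOn (fun x : ℝ => c * x ^ (1 - α)) (Ioi D) :=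
      (integrableOn_Ioi_rpow_of_lt (by linarith : 1 - α < -1) hD).const_mul c
    refine hmaj.mono' ?_ ?_
    · refine (continuousOn_id.mul (ContinuousOn.sub continuousOn_const ?_)).aestronglyMeasurable
        measurableSet_Ioi
      refine (Real.continuous_exp.comp continuous_neg).continuousOn.comp ?_ (Set.mapsTo_univ _ _)
      exact continuousOn_const.mul (continuousOn_id.rpow_const fun x hx =>
        Or.inl (ne_of_gt (hD.trans hx)))
    · filter_upwards [ae_restrict_mem measurableSet_Ioi] with x hx
      have hx0 : 0 < x := hD.trans hx
      have hy : 0 < c * x ^ (-α) := hipos x hx0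
      have hb1 : Real.exp (-(c * x ^ (-α))) ≤ 1 := by
        simpa using Real.exp_le_exp.2 (by linarith : -(c * x ^ (-α)) ≤ 0)
      have hb2 : 1 - Real.exp (-(c * x ^ (-α))) ≤ c * x ^ (-α) := by
        nlinarith [Real.add_one_le_exp (-(c * x ^ (-α)))]
      rw [Real.norm_eq_abs, abs_of_nonneg (by nlinarith)]
      calc x * (1 - Real.exp (-(c * x ^ (-α)))) ≤ x * (c * x ^ (-α)) :=
            mul_le_mul_of_nonneg_left hb2 hx0.le
        _ = c * x ^ (1 - α) := by
            rw [show (1:ℝ) - α = 1 + -α by ring, Real.rpow_add hx0, Real.rpow_one]; ring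
  -- limit of F at infinity
  have htend : Tendsto F atTop (𝓝 (-(c ^ (2 / α) / α) * (Real.Gamma (s + 1) / s))) := by
    have hi0 : Tendsto (fun x : ℝ => c * x ^ (-α)) atTop (𝓝[>] (0:ℝ)) := by
      rw [tendsto_nhdsWithin_iff]
      constructor
      · simpa using (tendsto_rpow_neg_atTop hα0).const_mul c
      · filter_upwards [eventually_gt_atTop (0:ℝ)] with x hx
        exact hipos x hx
    have hcompose := ((tendsto_H hs1 hs0).comp hi0).const_mul (-(c ^ (2 / α) / α))
    refine hcompose.congr' ?_
    filter_upwards [eventually_gt_atTop (0:ℝ)] with x hx0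
    have hP : c ^ (2 / α) * (c * x ^ (-α)) ^ s = x ^ 2 := by
      rw [Real.mul_rpow hc.le (by positivity), ← Real.rpow_mul hx0.le,
        show (-α) * s = 2 by rw [hs_def]; field_simp]
      rw [← mul_assoc, ← Real.rpow_add hc, show 2 / α + s = 0 by rw [hs_def]; ring,
        Real.rpow_zero, one_mul, show (2:ℝ) = ((2:ℕ):ℝ) by norm_num, Real.rpow_natCast]
    show -(c ^ (2 / α) / α) * ((c * x ^ (-α)) ^ s / s + uGamma s (c * x ^ (-α))) = F x
    rw [hF_def]
    have h2 : -(c ^ (2 / α) / α) * ((c * x ^ (-α)) ^ s / s) = x ^ 2 / 2 := by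
      have e1 : -(c ^ (2 / α) / α) * ((c * x ^ (-α)) ^ s / s)
          = -(c ^ (2 / α) * (c * x ^ (-α)) ^ s) / (α * s) := by ring
      rw [e1, hP, show α * s = -2 by rw [hs_def]; field_simp]
      ring
    linear_combination h2
  -- FTC
  have hFTC := integral_Ioi_of_hasDerivAt_of_tendsto' hderiv hint htend
  rw [hFTC]
  simp only [hF_def]
  have harg : c * D ^ (-α) = c / D ^ α := by
    rw [Real.rpow_neg hD.le, div_eq_mul_inv]
  rw [harg, show s + 1 = 1 - 2 / α by rw [hs_def]; ring, hs_def]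
  field_simp
  ring
end

section
/- Let α > 2, s > 0, D > 0, and let P_u, P_b > 0 with P_u ≠ P_b. Then (1/(P_u − P_b)) · ∫₀^∞ (e^{−g/P_u} − e^{−g/P_b}) · ( 2·∫_D^∞ x·(1 − exp(−s g x^{−α})) dx ) dg = −D² + s^{2/α} · (2/(α (P_u − P_b))) · [ π·csc(2π/α)·(P_u^{2/α + 1} − P_b^{2/α + 1}) + I₁(2/α + 1, 1/P_u, −2/α, s/D^α) − I₁(2/α + 1, 1/P_b, −2/α, s/D^α) ], where I₁(x, y, z, ν) := ∫₀^∞ t^{x−1} e^{−y t} Γ(z, ν t) dt and Γ(a,u) is the real upper incomplete gamma function. (This is the exponent of the Laplace transform of the network interference from full-duplex cells with unequal access-point and user transmit powers.) -/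
open MeasureTheory Real

/-- I₁(x,y,z,ν) = ∫₀^∞ t^{x−1} e^{−yt} Γ(z, νt) dt. -/
noncomputable def I1 (x y z ν : ℝ) : ℝ :=
  ∫ t in Set.Ioi (0 : ℝ), t ^ (x - 1) * Real.exp (-(y * t)) * uGamma z (ν * t)

set_option maxHeartbeats 1000000

section helpers
open Set

lemma exp_int {a : ℝ} (ha : 0 < a) :
    ∫ g in Set.Ioi (0:ℝ), Real.exp (-(a * g)) = a⁻¹ := by
  have := integral_comp_mul_left_Ioi (fun x => Real.exp (-x)) 0 ha
  simp only [mul_zero, smul_eq_mul, integral_exp_neg_Ioi_zero] at this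
  rw [this, mul_one]

lemma exp_intOn (a : ℝ) {b : ℝ} (hb : 0 < b) :
    IntegrableOn (fun g => Real.exp (-(b * g))) (Set.Ioi a) := by
  simpa [neg_mul] using exp_neg_integrableOn_Ioi a hb

lemma S2 (α s P : ℝ) (hα : 2 < α) (hs : 0 < s) (hP : 0 < P) :
    (IntegrableOn (fun x => P * x - x * (P⁻¹ + s * x ^ (-α))⁻¹) (Set.Ioi (0:ℝ))) ∧
    ∫ x in Set.Ioi (0:ℝ), (P * x - x * (P⁻¹ + s * x ^ (-α))⁻¹)
      = Real.pi * (Real.sin (2 * Real.pi / α))⁻¹ * ((s * P) ^ (2/α) * P / α) := by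
  have hα0 : (0:ℝ) < α := by linarith
  have h2α : (0:ℝ) < 2/α := by positivity
  have h2α1 : 2/α < 1 := by rw [div_lt_one hα0]; linarith
  set c : ℝ := s * P with hc
  have hc0 : 0 < c := by positivity
  set f : ℝ → ℝ → ℝ := fun t x => (P*c) * (Real.exp (-(c*t)) * (x * Real.exp (-(t * x ^ α)))) with hf
  -- pointwise inner integral over t
  have hA : ∀ x ∈ Set.Ioi (0:ℝ), (∫ t in Set.Ioi (0:ℝ), f t x) = P * x - x * (P⁻¹ + s * x ^ (-α))⁻¹ := by
    intro x hx
    have hx : (0:ℝ) < x := hx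
    have hxa : 0 < x ^ α := rpow_pos_of_pos hx α
    have h1 : (∫ t in Set.Ioi (0:ℝ), f t x) = P * c * (x * (c + x ^ α)⁻¹) := by
      rw [hf]
      simp only []
      rw [MeasureTheory.integral_const_mul]
      congr 1
      calc ∫ t in Set.Ioi (0:ℝ), Real.exp (-(c*t)) * (x * Real.exp (-(t * x ^ α)))
          = ∫ t in Set.Ioi (0:ℝ), x * Real.exp (-((c + x ^ α) * t)) := by
            refine setIntegral_congr_fun measurableSet_Ioi (fun t _ => ?_)
            rw [mul_left_comm, ← Real.exp_add, show -(c*t) + -(t * x ^ α) = -((c + x ^ α) * t) by ring]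
        _ = x * (c + x ^ α)⁻¹ := by
            rw [MeasureTheory.integral_const_mul, exp_int (by positivity)]
    rw [h1, Real.rpow_neg hx.le]
    have h2 : P⁻¹ + s * (x ^ α)⁻¹ > 0 := by positivity
    field_simp
    ring
  -- measurability of uncurried f
  have hmeas : AEStronglyMeasurable (Function.uncurry f)
      ((volume.restrict (Set.Ioi (0:ℝ))).prod (volume.restrict (Set.Ioi (0:ℝ)))) := by
    apply Measurable.aestronglyMeasurable
    apply Measurable.const_mul
    exact ((measurable_fst.const_mul c).neg.exp).mul
      (measurable_snd.mul (((measurable_fst.mul (measurable_snd.pow_const _)).neg.exp)))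
  -- inner x-integral for fixed t > 0
  have hxint : ∀ t : ℝ, 0 < t → IntegrableOn (fun x : ℝ => x * Real.exp (-(t * x ^ α))) (Set.Ioi (0:ℝ)) := by
    intro t ht
    have := integrableOn_rpow_mul_exp_neg_mul_rpow (by norm_num : (-1:ℝ) < 1) (by linarith : (0:ℝ) < α) ht
    refine this.congr_fun (fun x hx => ?_) measurableSet_Ioi
    simp only [Real.rpow_one, neg_mul]
  have hxval : ∀ t : ℝ, 0 < t → ∫ x in Set.Ioi (0:ℝ), x * Real.exp (-(t * x ^ α))
      = t ^ (-(2:ℝ)/α) * (1/α) * Real.Gamma (2/α) := by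
    intro t ht
    have h := integral_rpow_mul_exp_neg_mul_rpow hα0 (by norm_num : (-1:ℝ) < 1) ht
    have e : ∫ x in Set.Ioi (0:ℝ), x * Real.exp (-(t * x ^ α))
        = ∫ x in Set.Ioi (0:ℝ), x ^ (1:ℝ) * Real.exp (-t * x ^ α) := by
      refine setIntegral_congr_fun measurableSet_Ioi (fun x hx => ?_)
      rw [Real.rpow_one, neg_mul]
    rw [e, h]
    norm_num
  -- integrability of uncurried f
  have hint : Integrable (Function.uncurry f)
      ((volume.restrict (Set.Ioi (0:ℝ))).prod (volume.restrict (Set.Ioi (0:ℝ)))) := by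
    rw [integrable_prod_iff hmeas]
    constructor
    · filter_upwards [ae_restrict_mem measurableSet_Ioi] with t ht
      simp only [Function.uncurry]
      exact (((hxint t ht).const_mul _).const_mul _)
    · have hbase : IntegrableOn
          (fun t : ℝ => (P*c*((1/α) * Real.Gamma (2/α))) * (Real.exp (-(c*t)) * t ^ (-(2:ℝ)/α)))
          (Set.Ioi (0:ℝ)) := by
        have := integrableOn_rpow_mul_exp_neg_mul_rpow
          (by rw [neg_div]; linarith : (-1:ℝ) < -(2:ℝ)/α) one_pos hc0
        refine ((this.congr_fun (fun x hx => ?_) measurableSet_Ioi)).const_mul _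
        rw [Real.rpow_one, neg_mul, mul_comm]
      refine hbase.congr ?_
      filter_upwards [ae_restrict_mem measurableSet_Ioi] with t ht
      simp only [Function.uncurry]
      have h1 : ∫ x, ‖f t x‖ ∂(volume.restrict (Set.Ioi (0:ℝ)))
          = ∫ x in Set.Ioi (0:ℝ), f t x := by
        refine setIntegral_congr_fun measurableSet_Ioi (fun x hx => ?_)
        have hx : (0:ℝ) < x := hx
        rw [Real.norm_eq_abs, abs_of_nonneg (by positivity)]
      rw [h1, hf]
      simp only []
      rw [MeasureTheory.integral_const_mul, MeasureTheory.integral_const_mul, hxval t ht]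
      ring
  -- put it together
  have hswap := MeasureTheory.integral_integral_swap hint
  have hmargin : IntegrableOn (fun x => P * x - x * (P⁻¹ + s * x ^ (-α))⁻¹) (Set.Ioi (0:ℝ)) := by
    have := hint.integral_prod_right
    simp only [Function.uncurry] at this
    refine this.congr ?_
    filter_upwards [ae_restrict_mem measurableSet_Ioi] with x hx
    exact hA x hx
  refine ⟨hmargin, ?_⟩
  have hL : ∫ x in Set.Ioi (0:ℝ), (P * x - x * (P⁻¹ + s * x ^ (-α))⁻¹)
      = ∫ x in Set.Ioi (0:ℝ), ∫ t in Set.Ioi (0:ℝ), f t x := by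
    refine setIntegral_congr_fun measurableSet_Ioi (fun x hx => ?_)
    exact (hA x hx).symm
  rw [hL, ← hswap]
  have hR : ∫ t in Set.Ioi (0:ℝ), ∫ x in Set.Ioi (0:ℝ), f t x
      = ∫ t in Set.Ioi (0:ℝ), (P*c*((1/α) * Real.Gamma (2/α))) * (Real.exp (-(c*t)) * t ^ (-(2:ℝ)/α)) := by
    refine setIntegral_congr_fun measurableSet_Ioi (fun t ht => ?_)
    rw [hf]
    simp only []
    rw [MeasureTheory.integral_const_mul, MeasureTheory.integral_const_mul, hxval t ht]
    ring
  rw [hR, MeasureTheory.integral_const_mul]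
  have hker : ∫ t in Set.Ioi (0:ℝ), Real.exp (-(c*t)) * t ^ (-(2:ℝ)/α)
      = c ^ (2/α - 1) * Real.Gamma (1 - 2/α) := by
    have h := integral_rpow_mul_exp_neg_mul_rpow (by norm_num : (0:ℝ) < 1)
      (by rw [neg_div]; linarith : (-1:ℝ) < -(2:ℝ)/α) hc0
    have e : ∫ t in Set.Ioi (0:ℝ), Real.exp (-(c*t)) * t ^ (-(2:ℝ)/α)
        = ∫ t in Set.Ioi (0:ℝ), t ^ (-(2:ℝ)/α) * Real.exp (-c * t ^ (1:ℝ)) := by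
      refine setIntegral_congr_fun measurableSet_Ioi (fun t ht => ?_)
      rw [Real.rpow_one, neg_mul, mul_comm]
    rw [e, h]
    rw [show (-(-(2:ℝ)/α + 1) / 1) = 2/α - 1 by ring, show (-(2:ℝ)/α + 1) = 1 - 2/α by ring]
    norm_num
  rw [hker]
  have hrefl : Real.Gamma (2/α) * Real.Gamma (1 - 2/α) = Real.pi / Real.sin (2 * Real.pi / α) := by
    rw [Real.Gamma_mul_Gamma_one_sub (2/α)]
    congr 1
    ring
  have hcpow : c ^ (2/α - 1) * c = c ^ (2/α) := by
    nth_rewrite 2 [← Real.rpow_one c]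
    rw [← Real.rpow_add hc0]
    norm_num
  calc P * c * (1 / α * Real.Gamma (2/α)) * (c ^ (2/α - 1) * Real.Gamma (1 - 2/α))
      = (Real.Gamma (2/α) * Real.Gamma (1 - 2/α)) * ((c ^ (2/α - 1) * c) * P * (1/α)) := by ring
    _ = Real.pi * (Real.sin (2 * Real.pi / α))⁻¹ * ((s*P) ^ (2/α) * P / α) := by
        rw [hrefl, hcpow, div_eq_mul_inv, ← hc]; ring

lemma uGamma_scale (z u : ℝ) (hu : 0 < u) :
    uGamma z u = u ^ z * ∫ w in Set.Ioi (1:ℝ), w ^ (z - 1) * Real.exp (-(u * w)) := by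
  have h := integral_comp_mul_left_Ioi (fun r => r ^ (z - 1) * Real.exp (-r)) 1 hu
  simp only [smul_eq_mul, mul_one] at h
  have h2 : ∫ t in Set.Ioi u, t ^ (z - 1) * Real.exp (-t)
      = u * ∫ x in Set.Ioi (1:ℝ), (u * x) ^ (z - 1) * Real.exp (-(u * x)) := by
    rw [h, ← mul_assoc, mul_inv_cancel₀ (ne_of_gt hu), one_mul]
  rw [uGamma, h2]
  have h3 : ∫ x in Set.Ioi (1:ℝ), (u * x) ^ (z - 1) * Real.exp (-(u * x))
      = u ^ (z - 1) * ∫ x in Set.Ioi (1:ℝ), x ^ (z - 1) * Real.exp (-(u * x)) := by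
    rw [← MeasureTheory.integral_const_mul]
    refine setIntegral_congr_fun measurableSet_Ioi (fun x hx => ?_)
    have hx0 : (0:ℝ) < x := lt_trans one_pos hx
    rw [Real.mul_rpow hu.le hx0.le]
    ring
  rw [h3, ← mul_assoc]
  congr 1
  nth_rewrite 1 [← Real.rpow_one u]
  rw [← Real.rpow_add hu]
  norm_num

lemma img (α D : ℝ) (hα0 : 0 < α) (hD : 0 < D) :
    (fun x : ℝ => D ^ α * x ^ (-α)) '' Set.Ioo 0 D = Set.Ioi 1 := by
  have hDα : (0:ℝ) < D ^ α := rpow_pos_of_pos hD α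
  ext y
  simp only [Set.mem_image, Set.mem_Ioo, Set.mem_Ioi]
  constructor
  · rintro ⟨x, hx, rfl⟩
    have hx0 : (0:ℝ) < x := hx.1
    have h1 : D ^ (-α) < x ^ (-α) := rpow_lt_rpow_of_neg hx0 hx.2 (by linarith)
    have h2 : D ^ α * D ^ (-α) = 1 := by
      rw [← Real.rpow_add hD]; simp
    have := mul_lt_mul_of_pos_left h1 hDα
    rwa [h2] at this
  · intro hy1
    have hy0 : (0:ℝ) < y := by linarith
    have hu0 : (0:ℝ) < y ^ (-(1/α)) := rpow_pos_of_pos hy0 _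
    refine ⟨D * y ^ (-(1/α)), ⟨by positivity, ?_⟩, ?_⟩
    · nth_rewrite 2 [show D = D * 1 by ring]
      exact mul_lt_mul_of_pos_left
        (Real.rpow_lt_one_of_one_lt_of_neg hy1 (by rw [neg_lt, neg_zero]; positivity)) hD
    · rw [Real.mul_rpow hD.le hu0.le, ← Real.rpow_mul hy0.le,
        show -(1/α) * -α = 1 by field_simp, Real.rpow_one, ← mul_assoc,
        ← Real.rpow_add hD]
      simp

lemma subst (α s D P : ℝ) (hα : 2 < α) (hs : 0 < s) (hD : 0 < D) (hP : 0 < P) :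
    ∫ w in Set.Ioi (1:ℝ), w ^ (-(2/α) - 1) * (P⁻¹ + (s / D ^ α) * w)⁻¹
      = ∫ x in Set.Ioo (0:ℝ) D, (α * D ^ (-(2:ℝ))) * (x * (P⁻¹ + s * x ^ (-α))⁻¹) := by
  have hα0 : (0:ℝ) < α := by linarith
  have hDα : (0:ℝ) < D ^ α := rpow_pos_of_pos hD α
  set z : ℝ := -(2/α) with hz
  set φ : ℝ → ℝ := fun x => D ^ α * x ^ (-α) with hφ
  set φ' : ℝ → ℝ := fun x => D ^ α * (-α * x ^ (-α - 1)) with hφ'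
  have hderiv : ∀ x ∈ Set.Ioo (0:ℝ) D, HasDerivWithinAt φ (φ' x) (Set.Ioo (0:ℝ) D) x := by
    intro x hx
    exact ((Real.hasDerivAt_rpow_const (p := -α) (Or.inl (ne_of_gt hx.1))).const_mul
      (D ^ α)).hasDerivWithinAt
  have hanti : StrictAntiOn φ (Set.Ioo (0:ℝ) D) := by
    intro a ha b hb hab
    exact mul_lt_mul_of_pos_left (rpow_lt_rpow_of_neg ha.1 hab (by linarith)) hDα
  have himg := img α D hα0 hD
  have key := integral_image_eq_integral_abs_deriv_smul (f := φ) (f' := φ')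
    measurableSet_Ioo hderiv (hanti.injOn)
    (fun w => w ^ (z - 1) * (P⁻¹ + (s / D ^ α) * w)⁻¹)
  rw [← hφ] at himg
  rw [← himg, key]
  refine setIntegral_congr_fun measurableSet_Ioo (fun x hx => ?_)
  have hx0 : (0:ℝ) < x := hx.1
  have hxa : (0:ℝ) < x ^ (-α) := rpow_pos_of_pos hx0 _
  have hxa1 : (0:ℝ) < x ^ (-α - 1) := rpow_pos_of_pos hx0 _
  have e1 : s / D ^ α * (D ^ α * x ^ (-α)) = s * x ^ (-α) := by
    field_simp
  have e1' : s / D ^ α * φ x = s * x ^ (-α) := by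
    rw [hφ]; field_simp
  have e2 : φ x ^ (z - 1) = D ^ (α * (z-1)) * x ^ ((-α) * (z-1)) := by
    rw [hφ]
    simp only []
    rw [Real.mul_rpow hDα.le hxa.le, ← Real.rpow_mul hD.le, ← Real.rpow_mul hx0.le]
  have habs : |φ' x| = α * x ^ (-α - 1) * D ^ α := by
    rw [hφ']
    simp only []
    rw [abs_mul, abs_mul, abs_neg, abs_of_pos hDα, abs_of_pos hα0, abs_of_pos hxa1]
    ring
  have h1 : α * (z - 1) = -2 - α := by rw [hz]; field_simp
  have h2 : (-α) * (z - 1) = 2 + α := by rw [hz]; field_simp; ring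
  have hD2 : D ^ α * D ^ (-2 - α : ℝ) = D ^ (-(2:ℝ)) := by
    rw [← Real.rpow_add hD]; ring_nf
  have hx2 : x ^ (-α - 1) * x ^ (2 + α : ℝ) = x := by
    rw [← Real.rpow_add hx0, show -α - 1 + (2 + α) = (1:ℝ) by ring, Real.rpow_one]
  rw [smul_eq_mul, habs, e1', e2, h1, h2]
  calc α * x ^ (-α - 1) * D ^ α * (D ^ (-2 - α : ℝ) * x ^ (2 + α : ℝ) * (P⁻¹ + s * x ^ (-α))⁻¹)
      = (D ^ α * D ^ (-2 - α : ℝ)) * (x ^ (-α - 1) * x ^ (2 + α : ℝ)) * (α * (P⁻¹ + s * x ^ (-α))⁻¹) := by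
        ring
    _ = α * D ^ (-(2:ℝ)) * (x * (P⁻¹ + s * x ^ (-α))⁻¹) := by rw [hD2, hx2]; ring



lemma S3 (α s D P : ℝ) (hα : 2 < α) (hs : 0 < s) (hD : 0 < D) (hP : 0 < P) :
    s ^ (2/α) * (2/α) * I1 (2/α + 1) (1/P) (-(2/α)) (s / D ^ α)
      = 2 * ∫ x in Set.Ioo (0:ℝ) D, x * (P⁻¹ + s * x ^ (-α))⁻¹ := by
  have hα0 : (0:ℝ) < α := by linarith
  have hDα : (0:ℝ) < D ^ α := rpow_pos_of_pos hD α
  set ν : ℝ := s / D ^ α with hν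
  have hν0 : 0 < ν := by positivity
  set z : ℝ := -(2/α) with hz
  set H : ℝ → ℝ → ℝ := fun t w => Real.exp (-(P⁻¹ * t)) * (w ^ (z - 1) * Real.exp (-(ν * t * w))) with hH
  -- I1 = ν^z * ∫ t, ∫ w, H t w
  have step1 : I1 (2/α + 1) (1/P) z ν = ν ^ z * ∫ t in Set.Ioi (0:ℝ), ∫ w in Set.Ioi (1:ℝ), H t w := by
    rw [I1, ← MeasureTheory.integral_const_mul]
    refine setIntegral_congr_fun measurableSet_Ioi (fun t ht => ?_)
    have ht0 : (0:ℝ) < t := ht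
    have hνt : 0 < ν * t := by positivity
    rw [uGamma_scale z (ν * t) hνt, hH]
    simp only []
    rw [Real.mul_rpow hν0.le ht0.le]
    have h1 : t ^ (2/α + 1 - 1) * (t ^ z) = 1 := by
      rw [← Real.rpow_add ht0, show 2/α + 1 - 1 + z = 0 by rw [hz]; ring, Real.rpow_zero]
    have h2 : ∀ w : ℝ, Real.exp (-(ν * t * w)) = Real.exp (-(ν * t * w)) := fun _ => rfl
    calc t ^ (2/α + 1 - 1) * Real.exp (-(1/P * t)) * (ν ^ z * t ^ z * ∫ w in Set.Ioi (1:ℝ), w ^ (z-1) * Real.exp (-(ν * t * w)))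
        = (t ^ (2/α + 1 - 1) * t ^ z) * ν ^ z * (Real.exp (-(1/P * t)) * ∫ w in Set.Ioi (1:ℝ), w ^ (z-1) * Real.exp (-(ν * t * w))) := by ring
      _ = ν ^ z * (Real.exp (-(P⁻¹ * t)) * ∫ w in Set.Ioi (1:ℝ), w ^ (z-1) * Real.exp (-(ν * t * w))) := by
          rw [h1, one_div]; ring
      _ = ν ^ z * ∫ w in Set.Ioi (1:ℝ), Real.exp (-(P⁻¹ * t)) * (w ^ (z-1) * Real.exp (-(ν * t * w))) := by
          rw [MeasureTheory.integral_const_mul]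
  -- integrability of uncurried H
  have h2a : (0:ℝ) < 2/α := by positivity
  have hzlt : z - 1 < -1 := by rw [hz]; linarith
  have hdom : Integrable (fun p : ℝ × ℝ => Real.exp (-(P⁻¹ * p.1)) * p.2 ^ (z - 1))
      ((volume.restrict (Set.Ioi (0:ℝ))).prod (volume.restrict (Set.Ioi (1:ℝ)))) :=
    Integrable.mul_prod (exp_intOn 0 (by positivity)) (integrableOn_Ioi_rpow_of_lt hzlt one_pos)
  have hmeasH : AEStronglyMeasurable (Function.uncurry H)
      ((volume.restrict (Set.Ioi (0:ℝ))).prod (volume.restrict (Set.Ioi (1:ℝ)))) := by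
    apply Measurable.aestronglyMeasurable
    exact ((measurable_fst.const_mul P⁻¹).neg.exp).mul
      ((measurable_snd.pow_const _).mul (((measurable_fst.const_mul ν).mul measurable_snd).neg.exp))
  have hintH : Integrable (Function.uncurry H)
      ((volume.restrict (Set.Ioi (0:ℝ))).prod (volume.restrict (Set.Ioi (1:ℝ)))) := by
    refine hdom.mono hmeasH ?_
    rw [Measure.prod_restrict]
    rw [ae_restrict_iff' (measurableSet_Ioi.prod measurableSet_Ioi)]
    refine Filter.Eventually.of_forall (fun p hp => ?_)
    have ht0 : (0:ℝ) < p.1 := hp.1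
    have hw1 : (1:ℝ) < p.2 := hp.2
    have hw0 : (0:ℝ) < p.2 := lt_trans one_pos hw1
    have hwz : (0:ℝ) < p.2 ^ (z - 1) := rpow_pos_of_pos hw0 _
    simp only [Function.uncurry, hH]
    rw [Real.norm_eq_abs, Real.norm_eq_abs, abs_of_pos (by positivity), abs_of_pos (by positivity)]
    have hle : Real.exp (-(ν * p.1 * p.2)) ≤ 1 := by
      rw [Real.exp_le_one_iff]
      have : 0 < ν * p.1 * p.2 := by positivity
      linarith
    calc Real.exp (-(P⁻¹ * p.1)) * (p.2 ^ (z - 1) * Real.exp (-(ν * p.1 * p.2)))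
        ≤ Real.exp (-(P⁻¹ * p.1)) * (p.2 ^ (z - 1) * 1) := by
          apply mul_le_mul_of_nonneg_left _ (Real.exp_pos _).le
          exact mul_le_mul_of_nonneg_left hle hwz.le
      _ = Real.exp (-(P⁻¹ * p.1)) * p.2 ^ (z - 1) := by ring
  -- swap and evaluate inner t-integral
  have hswap := MeasureTheory.integral_integral_swap (f := H) hintH
  have hinner : ∀ w : ℝ, w ∈ Set.Ioi (1:ℝ) →
      (∫ t in Set.Ioi (0:ℝ), H t w) = w ^ (z - 1) * (P⁻¹ + ν * w)⁻¹ := by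
    intro w hw
    have hw1 : (1:ℝ) < w := hw
    have hw0 : (0:ℝ) < w := lt_trans one_pos hw1
    have ha : 0 < P⁻¹ + ν * w := by positivity
    have e : ∀ t : ℝ, H t w = w ^ (z - 1) * Real.exp (-((P⁻¹ + ν * w) * t)) := by
      intro t
      rw [hH]
      simp only []
      rw [mul_left_comm, ← Real.exp_add, show -(P⁻¹ * t) + -(ν * t * w) = -((P⁻¹ + ν * w) * t) by ring]
    simp_rw [e]
    rw [MeasureTheory.integral_const_mul, exp_int ha]
  have step2 : I1 (2/α + 1) (1/P) z ν
      = ν ^ z * ∫ w in Set.Ioi (1:ℝ), w ^ (z - 1) * (P⁻¹ + ν * w)⁻¹ := by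
    rw [step1, hswap]
    congr 1
    exact setIntegral_congr_fun measurableSet_Ioi hinner
  -- substitute
  rw [hz] at step2
  rw [step2, hν, subst α s D P hα hs hD hP, MeasureTheory.integral_const_mul]
  -- final scalar algebra
  have hνz : (s / D ^ α) ^ ((-(2/α)) : ℝ) = s ^ ((-(2/α)) : ℝ) / D ^ ((-2) : ℝ) := by
    rw [Real.div_rpow hs.le hDα.le, ← Real.rpow_mul hD.le]
    congr 2
    field_simp
  rw [hνz]
  have h1 : s ^ (2/α) * s ^ ((-(2/α)) : ℝ) = 1 := by
    rw [← Real.rpow_add hs]; simp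
  have hD2 : (0:ℝ) < D ^ ((-2) : ℝ) := rpow_pos_of_pos hD _
  have h2 : D ^ ((-2):ℝ) / D ^ ((-2):ℝ) = 1 := div_self (ne_of_gt hD2)
  have h3 : 2/α * α = 2 := div_mul_cancel₀ 2 (ne_of_gt hα0)
  set X : ℝ := ∫ x in Set.Ioo (0:ℝ) D, x * (P⁻¹ + s * x ^ (-α))⁻¹ with hX
  calc s ^ (2/α) * (2/α) * (s ^ (-(2/α)) / D ^ ((-2):ℝ) * (α * D ^ (-(2:ℝ)) * X))
      = (s ^ (2/α) * s ^ (-(2/α))) * (D ^ ((-2):ℝ) / D ^ ((-2):ℝ)) * (2/α * α) * X := by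
        rw [show ((-2):ℝ) = -(2:ℝ) by norm_num]; ring
    _ = 2 * X := by rw [h1, h2, h3]; ring

lemma S1 (α s D P : ℝ) (hα : 2 < α) (hs : 0 < s) (hD : 0 < D) (hP : 0 < P) :
    (IntegrableOn (fun g => Real.exp (-(g / P)) *
        (2 * ∫ x in Set.Ioi D, x * (1 - Real.exp (-(s * g * x ^ (-α)))))) (Set.Ioi (0:ℝ))) ∧
    ∫ g in Set.Ioi (0:ℝ), Real.exp (-(g / P)) *
        (2 * ∫ x in Set.Ioi D, x * (1 - Real.exp (-(s * g * x ^ (-α)))))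
      = 2 * ∫ x in Set.Ioi D, (P * x - x * (P⁻¹ + s * x ^ (-α))⁻¹) := by
  have hα0 : (0:ℝ) < α := by linarith
  have hP' : (0:ℝ) < P⁻¹ := by positivity
  set F : ℝ → ℝ → ℝ :=
    fun g x => Real.exp (-(g / P)) * (x * (1 - Real.exp (-(s * g * x ^ (-α))))) with hF
  have hbound : ∀ g x : ℝ, 0 < g → D < x →
      0 ≤ F g x ∧ F g x ≤ (Real.exp (-(g / P)) * (s * g)) * x ^ (1 - α) := by
    intro g x hg hx
    have hx0 : (0:ℝ) < x := lt_trans hD hx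
    have hxa : (0:ℝ) < x ^ (-α) := rpow_pos_of_pos hx0 _
    have hu : 0 < s * g * x ^ (-α) := by positivity
    have hE := Real.exp_pos (-(g / P))
    constructor
    · have h1 : Real.exp (-(s * g * x ^ (-α))) ≤ 1 := by
        rw [Real.exp_le_one_iff]; linarith
      rw [hF]; simp only []
      exact mul_nonneg hE.le (mul_nonneg hx0.le (by linarith))
    · have h1 : 1 - Real.exp (-(s * g * x ^ (-α))) ≤ s * g * x ^ (-α) := by
        have := Real.add_one_le_exp (-(s * g * x ^ (-α)))
        linarith
      have h3 : x ^ (1 - α) = x * x ^ (-α) := by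
        rw [show (1:ℝ) - α = 1 + (-α) by ring, Real.rpow_add hx0, Real.rpow_one]
      have h2 : x * (1 - Real.exp (-(s * g * x ^ (-α)))) ≤ x * (s * g * x ^ (-α)) :=
        mul_le_mul_of_nonneg_left h1 hx0.le
      rw [hF]; simp only [h3]
      calc Real.exp (-(g / P)) * (x * (1 - Real.exp (-(s * g * x ^ (-α)))))
          ≤ Real.exp (-(g / P)) * (x * (s * g * x ^ (-α))) :=
            mul_le_mul_of_nonneg_left h2 hE.le
        _ = Real.exp (-(g / P)) * (s * g) * (x * x ^ (-α)) := by ring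
  have hFmeas : Measurable (Function.uncurry F) := by
    apply Measurable.mul
    · exact ((measurable_fst.div_const P).neg).exp
    · exact measurable_snd.mul (measurable_const.sub
        ((((measurable_fst.const_mul s).mul (measurable_snd.pow_const _)).neg).exp))
  have hAESM : AEStronglyMeasurable (Function.uncurry F)
      ((volume.restrict (Set.Ioi (0:ℝ))).prod (volume.restrict (Set.Ioi D))) :=
    hFmeas.aestronglyMeasurable
  have hrpow : IntegrableOn (fun x : ℝ => x ^ (1 - α)) (Set.Ioi D) :=
    integrableOn_Ioi_rpow_of_lt (by linarith) hD
  -- per-g integrability in x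
  have hxint : ∀ g : ℝ, 0 < g → IntegrableOn (fun x => F g x) (Set.Ioi D) := by
    intro g hg
    have hm : Measurable fun x => F g x := by
      have h := hFmeas.comp (measurable_const.prodMk measurable_id : Measurable fun x : ℝ => (g, x))
      simpa only [Function.comp_def, Function.uncurry] using h
    refine (hrpow.const_mul (Real.exp (-(g / P)) * (s * g))).mono
      hm.aestronglyMeasurable ?_
    rw [ae_restrict_iff' measurableSet_Ioi]
    refine Filter.Eventually.of_forall (fun x hx => ?_)
    obtain ⟨h0, h1⟩ := hbound g x hg hx
    have hx0 : (0:ℝ) < x := lt_trans hD hx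
    rw [Real.norm_eq_abs, Real.norm_eq_abs, abs_of_nonneg h0, abs_of_nonneg (by positivity)]
    exact h1
  -- integrable uncurry
  have hintF : Integrable (Function.uncurry F)
      ((volume.restrict (Set.Ioi (0:ℝ))).prod (volume.restrict (Set.Ioi D))) := by
    rw [integrable_prod_iff hAESM]
    constructor
    · filter_upwards [ae_restrict_mem measurableSet_Ioi] with g hg
      simp only [Function.uncurry]
      exact hxint g hg
    · set C : ℝ := ∫ x in Set.Ioi D, x ^ (1 - α) with hC
      have hC0 : 0 ≤ C := setIntegral_nonneg measurableSet_Ioi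
        (fun x hx => (rpow_pos_of_pos (lt_trans hD hx) _).le)
      have hgdom : IntegrableOn (fun g : ℝ => (s * C) * (g * Real.exp (-(g / P)))) (Set.Ioi (0:ℝ)) := by
        have := integrableOn_rpow_mul_exp_neg_mul_rpow (by norm_num : (-1:ℝ) < 1)
          one_pos hP'
        refine (this.congr_fun (fun t ht => ?_) measurableSet_Ioi).const_mul _
        rw [Real.rpow_one, neg_mul, mul_comm P⁻¹ t, ← div_eq_mul_inv]
      refine Integrable.mono hgdom (hAESM.norm.integral_prod_right') ?_
      rw [ae_restrict_iff' measurableSet_Ioi]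
      refine Filter.Eventually.of_forall (fun g hg => ?_)
      have hg0 : (0:ℝ) < g := hg
      simp only [Function.uncurry, Real.norm_eq_abs]
      have hnn' : 0 ≤ ∫ x in Set.Ioi D, |F g x| := integral_nonneg (fun x => abs_nonneg _)
      rw [abs_of_nonneg hnn', abs_of_nonneg (by positivity : (0:ℝ) ≤ s * C * (g * Real.exp (-(g / P))))]
      have hle : ∫ x in Set.Ioi D, |F g x|
          ≤ ∫ x in Set.Ioi D, (Real.exp (-(g / P)) * (s * g)) * x ^ (1 - α) := by
        refine integral_mono_of_nonneg (Filter.Eventually.of_forall (fun x => abs_nonneg _))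
          (hrpow.const_mul _) ?_
        filter_upwards [ae_restrict_mem measurableSet_Ioi] with x hx
        obtain ⟨h0, h1⟩ := hbound g x hg0 hx
        rw [abs_of_nonneg h0]
        exact h1
      calc ∫ x in Set.Ioi D, |F g x|
          ≤ ∫ x in Set.Ioi D, (Real.exp (-(g / P)) * (s * g)) * x ^ (1 - α) := hle
        _ = (Real.exp (-(g / P)) * (s * g)) * C := by rw [MeasureTheory.integral_const_mul, hC]
        _ = s * C * (g * Real.exp (-(g / P))) := by ring
  -- inner g-integral for fixed x
  have hA : ∀ x : ℝ, x ∈ Set.Ioi D →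
      (∫ g in Set.Ioi (0:ℝ), F g x) = P * x - x * (P⁻¹ + s * x ^ (-α))⁻¹ := by
    intro x hx
    have hx0 : (0:ℝ) < x := lt_trans hD hx
    have hxa : (0:ℝ) < x ^ (-α) := rpow_pos_of_pos hx0 _
    have hq : (0:ℝ) < P⁻¹ + s * x ^ (-α) := by positivity
    have e : ∀ g : ℝ, F g x
        = x * Real.exp (-(P⁻¹ * g)) - x * Real.exp (-((P⁻¹ + s * x ^ (-α)) * g)) := by
      intro g
      rw [hF]; simp only []
      have e1 : Real.exp (-(g / P)) = Real.exp (-(P⁻¹ * g)) := by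
        congr 1; field_simp
      have e2 : Real.exp (-(g / P)) * Real.exp (-(s * g * x ^ (-α)))
          = Real.exp (-((P⁻¹ + s * x ^ (-α)) * g)) := by
        rw [← Real.exp_add]; congr 1; field_simp; ring
      calc Real.exp (-(g / P)) * (x * (1 - Real.exp (-(s * g * x ^ (-α)))))
          = x * Real.exp (-(g / P))
            - x * (Real.exp (-(g / P)) * Real.exp (-(s * g * x ^ (-α)))) := by ring
        _ = x * Real.exp (-(P⁻¹ * g)) - x * Real.exp (-((P⁻¹ + s * x ^ (-α)) * g)) := by
            rw [e2, e1]
    simp_rw [e]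
    rw [MeasureTheory.integral_sub ((exp_intOn 0 hP').const_mul x)
      ((exp_intOn 0 hq).const_mul x),
      MeasureTheory.integral_const_mul, MeasureTheory.integral_const_mul,
      exp_int hP', exp_int hq, inv_inv]
    ring
  -- conclude
  have hptwise : ∀ g : ℝ, Real.exp (-(g / P)) *
      (2 * ∫ x in Set.Ioi D, x * (1 - Real.exp (-(s * g * x ^ (-α)))))
      = 2 * ∫ x in Set.Ioi D, F g x := by
    intro g
    rw [hF]; simp only []
    rw [MeasureTheory.integral_const_mul]
    ring
  constructor
  · refine ((hintF.integral_prod_left).const_mul 2).congr ?_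
    refine Filter.Eventually.of_forall (fun g => ?_)
    simp only [Function.uncurry]
    exact (hptwise g).symm
  · calc ∫ g in Set.Ioi (0:ℝ), Real.exp (-(g / P)) *
        (2 * ∫ x in Set.Ioi D, x * (1 - Real.exp (-(s * g * x ^ (-α)))))
        = ∫ g in Set.Ioi (0:ℝ), 2 * ∫ x in Set.Ioi D, F g x := by
          exact setIntegral_congr_fun measurableSet_Ioi (fun g _ => hptwise g)
      _ = 2 * ∫ g in Set.Ioi (0:ℝ), ∫ x in Set.Ioi D, F g x := MeasureTheory.integral_const_mul 2 _
      _ = 2 * ∫ x in Set.Ioi D, ∫ g in Set.Ioi (0:ℝ), F g x := by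
          rw [MeasureTheory.integral_integral_swap hintF]
      _ = 2 * ∫ x in Set.Ioi D, (P * x - x * (P⁻¹ + s * x ^ (-α))⁻¹) := by
          congr 1
          exact setIntegral_congr_fun measurableSet_Ioi hA

end helpers

lemma key (α s D P : ℝ) (hα : 2 < α) (hs : 0 < s) (hD : 0 < D) (hP : 0 < P) :
    (IntegrableOn (fun g => Real.exp (-(g / P)) *
        (2 * ∫ x in Set.Ioi D, x * (1 - Real.exp (-(s * g * x ^ (-α)))))) (Set.Ioi (0:ℝ))) ∧
    ∫ g in Set.Ioi (0:ℝ), Real.exp (-(g / P)) *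
        (2 * ∫ x in Set.Ioi D, x * (1 - Real.exp (-(s * g * x ^ (-α)))))
      = -D ^ 2 * P + s ^ (2 / α) * (2 / α) *
        (Real.pi * (Real.sin (2 * Real.pi / α))⁻¹ * P ^ (2 / α + 1)
          + I1 (2 / α + 1) (1 / P) (-(2 / α)) (s / D ^ α)) := by
  have hα0 : (0:ℝ) < α := by linarith
  obtain ⟨hint1, hval1⟩ := S1 α s D P hα hs hD hP
  obtain ⟨hint2, hval2⟩ := S2 α s P hα hs hP
  have h3 := S3 α s D P hα hs hD hP
  refine ⟨hint1, ?_⟩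
  set G : ℝ → ℝ := fun x => P * x - x * (P⁻¹ + s * x ^ (-α))⁻¹ with hG
  have hG_Ioc : IntegrableOn G (Set.Ioc 0 D) := hint2.mono_set Set.Ioc_subset_Ioi_self
  have hG_IoiD : IntegrableOn G (Set.Ioi D) := hint2.mono_set (Set.Ioi_subset_Ioi hD.le)
  have hG_Ioo : IntegrableOn G (Set.Ioo 0 D) := hG_Ioc.mono_set Set.Ioo_subset_Ioc_self
  have hsplit : (∫ x in Set.Ioi (0:ℝ), G x)
      = (∫ x in Set.Ioc (0:ℝ) D, G x) + ∫ x in Set.Ioi D, G x := by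
    rw [← MeasureTheory.setIntegral_union Set.Ioc_disjoint_Ioi_same measurableSet_Ioi
      hG_Ioc hG_IoiD, Set.Ioc_union_Ioi_eq_Ioi hD.le]
  have hPx : IntegrableOn (fun x : ℝ => P * x) (Set.Ioo 0 D) := by
    have h := (intervalIntegral.intervalIntegrable_id (μ := volume) (a := (0:ℝ)) (b := D))
    rw [intervalIntegrable_iff_integrableOn_Ioc_of_le hD.le] at h
    exact (h.mono_set Set.Ioo_subset_Ioc_self).const_mul P
  have hxQ : IntegrableOn (fun x : ℝ => x * (P⁻¹ + s * x ^ (-α))⁻¹) (Set.Ioo 0 D) := by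
    have h := hPx.sub hG_Ioo
    refine h.congr (Filter.Eventually.of_forall (fun x => ?_))
    simp only [Pi.sub_apply, hG]; ring
  have hIoox : (∫ x in Set.Ioo (0:ℝ) D, x) = D ^ 2 / 2 := by
    rw [← MeasureTheory.integral_Ioc_eq_integral_Ioo, ← intervalIntegral.integral_of_le hD.le,
      integral_id]
    norm_num
  have hIoc : (∫ x in Set.Ioc (0:ℝ) D, G x)
      = P * (D ^ 2 / 2) - ∫ x in Set.Ioo (0:ℝ) D, x * (P⁻¹ + s * x ^ (-α))⁻¹ := by
    rw [MeasureTheory.integral_Ioc_eq_integral_Ioo]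
    have e : (∫ x in Set.Ioo (0:ℝ) D, G x)
        = (∫ x in Set.Ioo (0:ℝ) D, P * x)
          - ∫ x in Set.Ioo (0:ℝ) D, x * (P⁻¹ + s * x ^ (-α))⁻¹ := by
      rw [← MeasureTheory.integral_sub hPx hxQ]
    rw [e, MeasureTheory.integral_const_mul, hIoox]
  rw [hval1, show (∫ x in Set.Ioi D, (P * x - x * (P⁻¹ + s * x ^ (-α))⁻¹))
      = ∫ x in Set.Ioi D, G x from rfl]
  have hIoiD : (∫ x in Set.Ioi D, G x)
      = (∫ x in Set.Ioi (0:ℝ), G x) - ∫ x in Set.Ioc (0:ℝ) D, G x := by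
    rw [hsplit]; ring
  rw [hIoiD, hIoc]
  have hV : (∫ x in Set.Ioi (0:ℝ), G x)
      = Real.pi * (Real.sin (2 * Real.pi / α))⁻¹ * ((s * P) ^ (2/α) * P / α) := hval2
  rw [hV]
  have hsp : (s * P) ^ (2/α) = s ^ (2/α) * P ^ (2/α) := Real.mul_rpow hs.le hP.le
  have hp1 : P ^ (2/α + 1) = P ^ (2/α) * P := Real.rpow_add_one (ne_of_gt hP) _
  rw [hsp, hp1]
  linear_combination -h3

/-- Laplace-transform exponent of the FD-cell interference, unequal powers. -/
theorem laplace_exponent_FD_unequal_powers (α s D Pu Pb : ℝ) (hα : 2 < α) (hs : 0 < s)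
    (hD : 0 < D) (hPu : 0 < Pu) (hPb : 0 < Pb) (hne : Pu ≠ Pb) :
    (1 / (Pu - Pb)) * ∫ g in Set.Ioi (0 : ℝ),
        (Real.exp (-(g / Pu)) - Real.exp (-(g / Pb))) *
        (2 * ∫ x in Set.Ioi D, x * (1 - Real.exp (-(s * g * x ^ (-α)))))
      = -D ^ 2 + s ^ (2 / α) * (2 / (α * (Pu - Pb))) *
        (Real.pi * (Real.sin (2 * Real.pi / α))⁻¹ * (Pu ^ (2 / α + 1) - Pb ^ (2 / α + 1))
          + I1 (2 / α + 1) (1 / Pu) (-(2 / α)) (s / D ^ α)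
          - I1 (2 / α + 1) (1 / Pb) (-(2 / α)) (s / D ^ α)) := by
  have hα0 : (0:ℝ) < α := by linarith
  obtain ⟨hintu, hvalu⟩ := key α s D Pu hα hs hD hPu
  obtain ⟨hintb, hvalb⟩ := key α s D Pb hα hs hD hPb
  have hsplit : ∫ g in Set.Ioi (0 : ℝ),
        (Real.exp (-(g / Pu)) - Real.exp (-(g / Pb))) *
        (2 * ∫ x in Set.Ioi D, x * (1 - Real.exp (-(s * g * x ^ (-α)))))
      = (∫ g in Set.Ioi (0 : ℝ), Real.exp (-(g / Pu)) *
          (2 * ∫ x in Set.Ioi D, x * (1 - Real.exp (-(s * g * x ^ (-α))))))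
        - ∫ g in Set.Ioi (0 : ℝ), Real.exp (-(g / Pb)) *
          (2 * ∫ x in Set.Ioi D, x * (1 - Real.exp (-(s * g * x ^ (-α))))) := by
    rw [← MeasureTheory.integral_sub hintu hintb]
    refine setIntegral_congr_fun measurableSet_Ioi (fun g _ => ?_)
    ring
  rw [hsplit, hvalu, hvalb]
  have hne' : Pu - Pb ≠ 0 := sub_ne_zero.mpr hne
  field_simp
  ring
end

section
/- Let x > 0, y > 0, ν > 0 and z ∈ ℝ with x + z > 0. Then the function t ↦ t^{x−1} e^{−y t} Γ(z, ν t) is Lebesgue integrable on (0, ∞), where Γ(a,u) := ∫_u^∞ s^{a−1} e^{−s} ds is the real upper incomplete gamma function. (This establishes that the quantity I₁(x, y, z, ν) = ∫₀^∞ t^{x−1} e^{−y t} Γ(z, ν t) dt is well defined.) -/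
open MeasureTheory Real

lemma aux_int (c : ℝ) {b u : ℝ} (hb : 0 < b) (hu : 0 < u) :
    IntegrableOn (fun s : ℝ => s ^ c * Real.exp (-(b * s))) (Set.Ioi u) := by
  have hmeas : AEStronglyMeasurable (fun s : ℝ => s ^ c * Real.exp (-(b * s)))
      (volume.restrict (Set.Ioi u)) := by
    apply ContinuousOn.aestronglyMeasurable ?_ measurableSet_Ioi
    apply ContinuousOn.mul
    · exact fun s hs =>
        (Real.continuousAt_rpow_const s c (Or.inl (ne_of_gt (hu.trans hs)))).continuousWithinAt
    · exact (Real.continuous_exp.comp (continuous_const.mul continuous_id).neg).continuousOn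
  rcases le_or_gt c 0 with hc | hc
  · have hint : IntegrableOn (fun s : ℝ => u ^ c * Real.exp (-b * s)) (Set.Ioi u) :=
      (exp_neg_integrableOn_Ioi u hb).const_mul _
    apply Integrable.mono' hint hmeas
    filter_upwards [ae_restrict_mem measurableSet_Ioi] with s hs
    rw [Real.norm_eq_abs, abs_mul, abs_of_nonneg (Real.rpow_nonneg (hu.trans hs).le _),
      abs_of_nonneg (Real.exp_pos _).le, neg_mul]
    exact mul_le_mul_of_nonneg_right
      (Real.rpow_le_rpow_of_nonpos hu hs.le hc) (Real.exp_pos _).le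
  · have := integrableOn_rpow_mul_exp_neg_mul_rpow (by linarith : (-1:ℝ) < c) one_pos hb
    have h2 : IntegrableOn (fun s : ℝ => s ^ c * Real.exp (-(b * s))) (Set.Ioi 0) := by
      refine this.congr_fun (fun s hs => ?_) measurableSet_Ioi
      beta_reduce; rw [Real.rpow_one, neg_mul]
    exact h2.mono_set (Set.Ioi_subset_Ioi hu.le)

lemma aux_int' (c : ℝ) {u : ℝ} (hu : 0 < u) :
    IntegrableOn (fun s : ℝ => s ^ c * Real.exp (-s)) (Set.Ioi u) :=
  (aux_int c one_pos hu).congr_fun (fun s _ => by beta_reduce; rw [one_mul]) measurableSet_Ioi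

lemma aux_int0 {c : ℝ} (hc : -1 < c) :
    IntegrableOn (fun s : ℝ => s ^ c * Real.exp (-s)) (Set.Ioi 0) :=
  (integrableOn_rpow_mul_exp_neg_mul_rpow hc one_pos one_pos).congr_fun
    (fun s _ => by beta_reduce; rw [Real.rpow_one, neg_mul, one_mul]) measurableSet_Ioi

lemma uGamma_nonneg {z u : ℝ} (hu : 0 < u) : 0 ≤ uGamma z u :=
  setIntegral_nonneg measurableSet_Ioi fun s hs =>
    mul_nonneg (Real.rpow_nonneg (hu.trans hs).le _) (Real.exp_pos _).le

lemma uGamma_le {z w u : ℝ} (hwz : w < z) (hw : w ≤ 0) (hu : 0 < u) :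
    uGamma z u ≤ u ^ w * ∫ s in Set.Ioi (0:ℝ), s ^ (z - w - 1) * Real.exp (-s) := by
  have hI0 : IntegrableOn (fun s : ℝ => s ^ (z - w - 1) * Real.exp (-s)) (Set.Ioi 0) :=
    aux_int0 (by linarith)
  have h1 : uGamma z u ≤ ∫ s in Set.Ioi u, u ^ w * (s ^ (z - w - 1) * Real.exp (-s)) := by
    refine setIntegral_mono_on (aux_int' (z-1) hu)
      (((aux_int' (z-w-1) hu)).const_mul _) measurableSet_Ioi (fun s hs => ?_)
    have hs0 : (0:ℝ) < s := hu.trans hs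
    have hsw : s ^ w ≤ u ^ w := Real.rpow_le_rpow_of_nonpos hu hs.le hw
    have : s ^ (z - 1) = s ^ w * s ^ (z - w - 1) := by
      rw [← Real.rpow_add hs0]; ring_nf
    rw [this, mul_assoc]
    exact mul_le_mul_of_nonneg_right hsw
      (mul_nonneg (Real.rpow_nonneg hs0.le _) (Real.exp_pos _).le)
  rw [integral_const_mul] at h1
  refine h1.trans (mul_le_mul_of_nonneg_left ?_ (Real.rpow_nonneg hu.le _))
  refine setIntegral_mono_set hI0 ?_ (HasSubset.Subset.eventuallyLE (Set.Ioi_subset_Ioi hu.le))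
  filter_upwards [ae_restrict_mem measurableSet_Ioi] with s hs
  exact mul_nonneg (Real.rpow_nonneg (le_of_lt hs) _) (Real.exp_pos _).le

/-- the integrand of I₁(x,y,z,ν) is Lebesgue integrable on (0,∞). -/
theorem integrable_I1_integrand (x y z ν : ℝ) (hx : 0 < x) (hy : 0 < y) (hν : 0 < ν)
    (hxz : 0 < x + z) :
    MeasureTheory.IntegrableOn
      (fun t => t ^ (x - 1) * Real.exp (-(y * t)) * uGamma z (ν * t))
      (Set.Ioi (0 : ℝ)) := by
  set m : ℝ := min x (x + z) with hm_def
  have hm : 0 < m := lt_min hx hxz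
  have hmx : m ≤ x := min_le_left _ _
  have hmxz : m ≤ x + z := min_le_right _ _
  set w : ℝ := min 0 (z - m / 2) with hw_def
  have hw0 : w ≤ 0 := min_le_left _ _
  have hwz : w < z := by
    rcases le_or_gt z 0 with h | h
    · exact lt_of_le_of_lt (min_le_right _ _) (by linarith)
    · exact lt_of_le_of_lt hw0 h
  have hxw : 0 < x + w := by
    rcases min_cases (0:ℝ) (z - m / 2) with ⟨h1, _⟩ | ⟨h1, _⟩ <;>
      rw [hw_def, h1] <;> linarith
  set A : ℝ := ∫ s in Set.Ioi (0:ℝ), s ^ (z - w - 1) * Real.exp (-s) with hA_def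
  have hA0 : 0 ≤ A :=
    setIntegral_nonneg measurableSet_Ioi fun s hs =>
      mul_nonneg (Real.rpow_nonneg (le_of_lt hs) _) (Real.exp_pos _).le
  -- dominating function
  have hgint : IntegrableOn
      (fun t : ℝ => (A * ν ^ w) * (t ^ (x + w - 1) * Real.exp (-(y * t)))) (Set.Ioi 0) := by
    refine Integrable.const_mul ?_ _
    exact (integrableOn_rpow_mul_exp_neg_mul_rpow (by linarith : (-1:ℝ) < x + w - 1)
      one_pos hy).congr_fun (fun s _ => by beta_reduce; rw [Real.rpow_one, neg_mul]) measurableSet_Ioi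
  -- measurability
  have hanti : AntitoneOn (fun t : ℝ => uGamma z (ν * t)) (Set.Ioi 0) := by
    intro a ha b hb hab
    have ha' : 0 < ν * a := mul_pos hν ha
    refine setIntegral_mono_set (aux_int' (z-1) ha') ?_
      (HasSubset.Subset.eventuallyLE (Set.Ioi_subset_Ioi (by nlinarith)))
    filter_upwards [ae_restrict_mem measurableSet_Ioi] with s hs
    exact mul_nonneg (Real.rpow_nonneg (ha'.trans hs).le _) (Real.exp_pos _).le
  have haes : AEStronglyMeasurable
      (fun t : ℝ => t ^ (x - 1) * Real.exp (-(y * t)) * uGamma z (ν * t))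
      (volume.restrict (Set.Ioi 0)) := by
    refine AEStronglyMeasurable.mul ?_
      (aemeasurable_restrict_of_antitoneOn measurableSet_Ioi hanti).aestronglyMeasurable
    apply ContinuousOn.aestronglyMeasurable ?_ measurableSet_Ioi
    apply ContinuousOn.mul
    · exact fun s hs =>
        (Real.continuousAt_rpow_const s (x-1) (Or.inl (ne_of_gt hs))).continuousWithinAt
    · exact (Real.continuous_exp.comp (continuous_const.mul continuous_id).neg).continuousOn
  refine Integrable.mono' hgint haes ?_
  filter_upwards [ae_restrict_mem measurableSet_Ioi] with t ht
  have ht0 : (0:ℝ) < t := ht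
  have hνt : 0 < ν * t := mul_pos hν ht0
  have hfe : 0 ≤ t ^ (x - 1) * Real.exp (-(y * t)) :=
    mul_nonneg (Real.rpow_nonneg ht0.le _) (Real.exp_pos _).le
  rw [Real.norm_eq_abs, abs_of_nonneg (mul_nonneg hfe (uGamma_nonneg hνt))]
  have h1 : uGamma z (ν * t) ≤ (ν * t) ^ w * A := uGamma_le hwz hw0 hνt
  calc t ^ (x - 1) * Real.exp (-(y * t)) * uGamma z (ν * t)
      ≤ t ^ (x - 1) * Real.exp (-(y * t)) * ((ν * t) ^ w * A) :=
        mul_le_mul_of_nonneg_left h1 hfe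
    _ = (A * ν ^ w) * (t ^ (x + w - 1) * Real.exp (-(y * t))) := by
        rw [Real.mul_rpow hν.le ht0.le,
          show x + w - 1 = (x - 1) + w by ring, Real.rpow_add ht0]
        ring
end
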